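/- Let (A, m) be a Noetherian local ring, B a commutative ring, f : A → B a ring homomorphism, and J an ideal of B with J ⊆ Jac(B) that is finitely generated as an A-module. Then the Krull dimension of the amalgamation A ⋈^f J equals the Krull dimension of A, and depth A ⋈^f J = min(depth A, depth J). -/

import Mathlib

open IsLocalRing

variable {A B : Type} [CommRing A] [CommRing B]

/-- The amalgamation `A ⋈^f J = {(a, f a + j) : a ∈ A, j ∈ J}` of `A` and `B` along the
ideal `J` with respect to the ring homomorphism `f`, as a subring of `A × B`. -/
def Amalg (f : A →+* B) (J : Ideal B) : Subring (A × B) where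
  carrier := {x | ∃ a : A, ∃ j ∈ J, x = (a, f a + j)}
  zero_mem' := ⟨0, 0, J.zero_mem, by ext <;> simp⟩
  one_mem' := ⟨1, 0, J.zero_mem, by ext <;> simp⟩
  add_mem' := by
    rintro x y ⟨a, j, hj, rfl⟩ ⟨b, k, hk, rfl⟩
    exact ⟨a + b, j + k, J.add_mem hj hk, by
      simp only [Prod.mk_add_mk, map_add, Prod.mk.injEq]
      exact ⟨trivial, by ring⟩⟩
  neg_mem' := by
    rintro x ⟨a, j, hj, rfl⟩
    exact ⟨-a, -j, J.neg_mem hj, by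
      simp only [Prod.neg_mk, map_neg, Prod.mk.injEq]
      exact ⟨trivial, by ring⟩⟩
  mul_mem' := by
    rintro x y ⟨a, j, hj, rfl⟩ ⟨b, k, hk, rfl⟩
    exact ⟨a * b, f a * k + j * f b + j * k,
      J.add_mem (J.add_mem (J.mul_mem_left _ hk) (J.mul_mem_right _ hj)) (J.mul_mem_right _ hj),
      by
      simp only [Prod.mk_mul_mk, map_mul, Prod.mk.injEq]
      exact ⟨trivial, by ring⟩⟩

/-- The canonical ring homomorphism `A → A ⋈^f J`, `a ↦ (a, f a)`. -/
def Amalg.incl (f : A →+* B) (J : Ideal B) : A →+* Amalg f J where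
  toFun a := ⟨(a, f a), a, 0, J.zero_mem, by simp⟩
  map_one' := Subtype.ext (by simp)
  map_mul' x y := Subtype.ext (by simp [Prod.mk_mul_mk])
  map_zero' := Subtype.ext (by simp)
  map_add' x y := Subtype.ext (by simp [Prod.mk_add_mk])

/-- `A ⋈^f J` as an `A`-module. -/
instance Amalg.moduleA (f : A →+* B) (J : Ideal B) : Module A (Amalg f J) :=
  Module.compHom _ (Amalg.incl f J)

noncomputable def lcDepth (R M : Type) [CommRing R] [IsLocalRing R]
    [AddCommGroup M] [Module R M] : ℕ∞ :=
  sInf {n : ℕ∞ | ∃ i : ℕ, n = (i : ℕ∞) ∧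
    Nontrivial ((localCohomology (maximalIdeal R) i).obj (ModuleCat.of R M))}

/-! ### Auxiliary material -/

open CategoryTheory CategoryTheory.Limits

section AddLemmas

variable {C D : Type*} [Category C] [Category D] [Preadditive C] [Preadditive D]

omit [Preadditive C] in
lemma natTrans_rightOp_add' {F G : Cᵒᵖ ⥤ D} (α β : F ⟶ G) :
    NatTrans.rightOp (α + β) = NatTrans.rightOp α + NatTrans.rightOp β := by
  ext W
  simp [NatTrans.rightOp, op_add]

omit [Preadditive C] in
lemma natTrans_leftOp_add' {F G : C ⥤ Dᵒᵖ} (α β : F ⟶ G) :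
    NatTrans.leftOp (α + β) = NatTrans.leftOp α + NatTrans.leftOp β := by
  ext W
  simp [NatTrans.leftOp, unop_add]

lemma mapHomologicalComplex_add' {F G : C ⥤ D} [F.Additive] [G.Additive] (α β : F ⟶ G)
    {ι : Type*} (c : ComplexShape ι) :
    NatTrans.mapHomologicalComplex (α + β) c =
      NatTrans.mapHomologicalComplex α c + NatTrans.mapHomologicalComplex β c := by
  ext K i
  simp [NatTrans.mapHomologicalComplex]
  rfl

end AddLemmas

section LD

variable {C : Type*} [Category C] {D : Type*} [Category D]
  [Abelian C] [HasProjectiveResolutions C] [Abelian D]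

lemma leftDerived_add' {F G : C ⥤ D} [F.Additive] [G.Additive] (α β : F ⟶ G) (n : ℕ) :
    NatTrans.leftDerived (α + β) n = NatTrans.leftDerived α n + NatTrans.leftDerived β n := by
  ext X
  have P : ProjectiveResolution X := (HasProjectiveResolution.out (Z := X)).some
  rw [NatTrans.app_add, CategoryTheory.ProjectiveResolution.leftDerived_app_eq (α + β) P,
    CategoryTheory.ProjectiveResolution.leftDerived_app_eq α P,
    CategoryTheory.ProjectiveResolution.leftDerived_app_eq β P,
    mapHomologicalComplex_add', NatTrans.app_add, Functor.map_add]
  simp [Preadditive.comp_add, Preadditive.add_comp]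
  erw [Preadditive.add_comp, Preadditive.comp_add]

end LD

section YonedaAdd

variable (R : Type*) [Ring R] (C : Type*) [Category C] [Preadditive C] [Linear R C]

lemma linearYoneda_map_add' {Y Z : C} (f g : Y ⟶ Z) :
    (linearYoneda R C).map (f + g) = (linearYoneda R C).map f + (linearYoneda R C).map g := by
  ext W x
  simp [linearYoneda]
  exact Preadditive.comp_add _ _ _ _ _ _

end YonedaAdd

section ExtAdd

variable (R : Type*) [Ring R] (C : Type*) [Category C] [Abelian C] [Linear R C]
  [EnoughProjectives C]

instance extObjAdditive (n : ℕ) (X : Cᵒᵖ) : ((Ext R C n).obj X).Additive := by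
  constructor
  intro Y Z f g
  show (NatTrans.leftOp (NatTrans.leftDerived (NatTrans.rightOp
      ((linearYoneda R C).map (f + g))) n)).app X = _
  rw [linearYoneda_map_add', natTrans_rightOp_add', leftDerived_add', natTrans_leftOp_add']
  rfl

end ExtAdd

section ColimAdd

variable {D : Type*} [Category D] {C₁ : Type*} [Category C₁] {C₂ : Type*} [Category C₂]
  [Preadditive C₁] [Preadditive C₂] [HasColimitsOfShape D C₂]

lemma colimit_functor_additive (F : D ⥤ C₁ ⥤ C₂) [HasColimit F] [∀ d, (F.obj d).Additive] :
    (colimit F).Additive := by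
  constructor
  intro X Y f g
  have hc : IsColimit (((evaluation C₁ C₂).obj X).mapCocone (colimit.cocone F)) :=
    isColimitOfPreserves _ (colimit.isColimit F)
  apply hc.hom_ext
  intro d
  have h₁ := (colimit.ι F d).naturality (f + g)
  have h₂ := (colimit.ι F d).naturality f
  have h₃ := (colimit.ι F d).naturality g
  show (colimit.ι F d).app X ≫ (colimit F).map (f + g) =
    (colimit.ι F d).app X ≫ ((colimit F).map f + (colimit F).map g)
  rw [← h₁, Functor.map_add, Preadditive.add_comp, h₂, h₃, Preadditive.comp_add]

end ColimAdd

instance localCohomology_additive {R : Type} [CommRing R] (J : Ideal R) (i : ℕ) :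
    (localCohomology J i).Additive := by
  show (colimit (localCohomology.diagram (localCohomology.idealPowersDiagram J) i)).Additive
  have := localCohomology.hasColimitDiagram (localCohomology.idealPowersDiagram J) i
  haveI : ∀ d,
      ((localCohomology.diagram (localCohomology.idealPowersDiagram J) i).obj d).Additive :=
    fun d => extObjAdditive R (ModuleCat R) i _
  exact colimit_functor_additive _

section DepthLemmas

lemma nontrivial_of_moduleCat_iso {R : Type} [CommRing R] {X Y : ModuleCat R} (i : X ≅ Y)
    (h : Nontrivial X) : Nontrivial Y :=
  haveI := h
  i.toLinearEquiv.symm.toEquiv.nontrivial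

variable (R M N : Type) [CommRing R] [IsLocalRing R]
  [AddCommGroup M] [Module R M] [AddCommGroup N] [Module R N]

lemma lcDepth_congr (e : M ≃ₗ[R] N) : lcDepth R M = lcDepth R N := by
  unfold lcDepth
  congr 1
  ext n
  constructor <;> rintro ⟨i, rfl, h⟩ <;> refine ⟨i, rfl, ?_⟩
  · exact nontrivial_of_moduleCat_iso
      ((localCohomology (maximalIdeal R) i).mapIso e.toModuleIso) h
  · exact nontrivial_of_moduleCat_iso
      ((localCohomology (maximalIdeal R) i).mapIso e.toModuleIso.symm) h

lemma nontrivial_prod_iff' {P Q : Type} [AddCommGroup P] [AddCommGroup Q] :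
    Nontrivial (P × Q) ↔ Nontrivial P ∨ Nontrivial Q := by
  constructor
  · rintro ⟨⟨x, y⟩, ⟨x', y'⟩, hxy⟩
    by_cases hx : x = x'
    · right
      exact ⟨y, y', fun hy => hxy (Prod.ext hx hy)⟩
    · exact Or.inl ⟨x, x', hx⟩
  · rintro (h | h)
    · haveI := h; infer_instance
    · haveI := h; infer_instance

lemma lcDepth_nontrivial_prod (i : ℕ) :
    Nontrivial ((localCohomology (maximalIdeal R) i).obj (ModuleCat.of R (M × N))) ↔
      Nontrivial ((localCohomology (maximalIdeal R) i).obj (ModuleCat.of R M)) ∨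
        Nontrivial ((localCohomology (maximalIdeal R) i).obj (ModuleCat.of R N)) := by
  set F := localCohomology (maximalIdeal R) i with hF
  haveI : Limits.PreservesBinaryBiproducts F :=
    Limits.preservesBinaryBiproducts_of_preservesBiproducts F
  have iso : F.obj (ModuleCat.of R (M × N)) ≅
      ModuleCat.of R ((F.obj (ModuleCat.of R M)) × (F.obj (ModuleCat.of R N))) :=
    F.mapIso (ModuleCat.biprodIsoProd (ModuleCat.of R M) (ModuleCat.of R N)).symm ≪≫
      F.mapBiprod _ _ ≪≫ ModuleCat.biprodIsoProd _ _
  constructor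
  · intro h
    exact (nontrivial_prod_iff' (P := F.obj (ModuleCat.of R M))
      (Q := F.obj (ModuleCat.of R N))).mp (nontrivial_of_moduleCat_iso iso h)
  · intro h
    refine nontrivial_of_moduleCat_iso iso.symm ?_
    exact (nontrivial_prod_iff' (P := F.obj (ModuleCat.of R M))
      (Q := F.obj (ModuleCat.of R N))).mpr h

lemma lcDepth_prod : lcDepth R (M × N) = min (lcDepth R M) (lcDepth R N) := by
  have hmin : ∀ a b : ℕ∞, min a b = a ⊓ b := fun _ _ => rfl
  unfold lcDepth
  rw [hmin, ← sInf_union]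
  congr 1
  ext n
  simp only [Set.mem_union, Set.mem_setOf_eq]
  constructor
  · rintro ⟨i, rfl, h⟩
    rcases (lcDepth_nontrivial_prod R M N i).mp h with h' | h'
    · exact Or.inl ⟨i, rfl, h'⟩
    · exact Or.inr ⟨i, rfl, h'⟩
  · rintro (⟨i, rfl, h⟩ | ⟨i, rfl, h⟩)
    · exact ⟨i, rfl, (lcDepth_nontrivial_prod R M N i).mpr (Or.inl h)⟩
    · exact ⟨i, rfl, (lcDepth_nontrivial_prod R M N i).mpr (Or.inr h)⟩

end DepthLemmas

section AmalgEquiv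

variable (f : A →+* B) (J : Ideal B) [Module A J]

/-- The amalgamation is isomorphic to `A × J` as an `A`-module. -/
noncomputable def amalgEquiv (hsmul : ∀ (a : A) (x : J), a • x = f a • x) :
    Amalg f J ≃ₗ[A] A × J where
  toFun x := (x.1.1, ⟨x.1.2 - f x.1.1, by
    obtain ⟨a, j, hj, h⟩ := x.2
    rw [h]
    simpa using hj⟩)
  map_add' x y := by
    refine Prod.ext rfl (Subtype.ext ?_)
    show (x.1.2 + y.1.2) - f (x.1.1 + y.1.1) = (x.1.2 - f x.1.1) + (y.1.2 - f y.1.1)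
    rw [map_add]; ring
  map_smul' a x := by
    refine Prod.ext rfl ?_
    rw [RingHom.id_apply, Prod.smul_snd, hsmul]
    refine Subtype.ext ?_
    show f a * x.1.2 - f (a * x.1.1) = f a * (x.1.2 - f x.1.1)
    rw [map_mul]; ring
  invFun p := ⟨(p.1, f p.1 + p.2), p.1, p.2, p.2.2, rfl⟩
  left_inv x := Subtype.ext (Prod.ext rfl (by simp))
  right_inv p := by
    refine Prod.ext rfl (Subtype.ext ?_)
    show (f p.1 + p.2) - f p.1 = (p.2 : B)
    ring

/-- The first projection of the amalgamation. -/
def amalgFst : Amalg f J →+* A where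
  toFun x := x.1.1
  map_one' := rfl
  map_mul' _ _ := rfl
  map_zero' := rfl
  map_add' _ _ := rfl

lemma amalgFst_surjective : Function.Surjective (amalgFst f J) :=
  fun a => ⟨Amalg.incl f J a, rfl⟩

end AmalgEquiv

theorem amalg_ringKrullDim_and_lcDepth (f : A →+* B) (J : Ideal B)
    [IsNoetherianRing A] [IsLocalRing A]
    (hJ : J ≤ (⊥ : Ideal B).jacobson) :
    letI : Module A J := Module.compHom _ f
    Module.Finite A J →
    ringKrullDim (Amalg f J) = ringKrullDim A ∧
    lcDepth A (Amalg f J) = min (lcDepth A A) (lcDepth A J) := by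
  intro hfin
  letI : Module A J := Module.compHom _ f
  have hsmul : ∀ (a : A) (x : J), a • x = f a • x := fun _ _ => rfl
  haveI : Module.Finite A J := hfin
  constructor
  · -- dimension
    refine le_antisymm ?_ (ringKrullDim_le_of_surjective (amalgFst f J) (amalgFst_surjective f J))
    haveI hAm : Module.Finite A (Amalg f J) :=
      Module.Finite.of_surjective (amalgEquiv f J hsmul).symm.toLinearMap
        (amalgEquiv f J hsmul).symm.surjective
    letI : Algebra A (Amalg f J) := (Amalg.incl f J).toAlgebra
    haveI hAm' : @Module.Finite A (Amalg f J) _ _ (Algebra.toModule) := hAm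
    haveI : Algebra.IsIntegral A (Amalg f J) := Algebra.IsIntegral.of_finite A _
    refine Order.krullDim_le_of_strictMono
      (fun P => PrimeSpectrum.comap (algebraMap A (Amalg f J)) P) ?_
    intro P Q hPQ
    rw [← PrimeSpectrum.asIdeal_lt_asIdeal] at hPQ ⊢
    obtain ⟨x, hxQ, hxP⟩ := SetLike.exists_of_lt hPQ
    haveI := P.isPrime
    exact Ideal.comap_lt_comap_of_integral_mem_sdiff hPQ.le ⟨hxQ, hxP⟩
      (Algebra.IsIntegral.isIntegral x)
  · -- depth
    rw [lcDepth_congr A (Amalg f J) (A × J) (amalgEquiv f J hsmul)]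
    exact lcDepth_prod A A J
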